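/- There exist elements α and β of ORCP_3, each regular in ORCP_3, such that their product αβ is not regular in ORCP_3. (For instance α with dom α = {1,3}, 1α = 1, 3α = 3, and β with dom β = {1,2,3}, 1β = 1, 2β = 2, 3β = 2.) -/

import Mathlib

/-- A partial transformation of the chain `[n] = {1,…,n}`, encoded as a map
`ℕ → Option ℕ`: `α x = some y` means `x ∈ dom α` and `xα = y`. -/
def IsPT (n : ℕ) (α : ℕ → Option ℕ) : Prop :=
  ∀ x y, α x = some y → x ∈ Set.Icc 1 n ∧ y ∈ Set.Icc 1 n

/-- Composition of partial transformations: apply `α` first, then `β`. -/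
def pcomp (α β : ℕ → Option ℕ) : ℕ → Option ℕ := fun x => (α x).bind β

/-- `α` is a contraction: `|xα − yα| ≤ |x − y|` on its domain. -/
def IsContraction (α : ℕ → Option ℕ) : Prop :=
  ∀ x y a b, α x = some a → α y = some b → Nat.dist a b ≤ Nat.dist x y

def IsOrderPreserving (α : ℕ → Option ℕ) : Prop :=
  ∀ x y a b, α x = some a → α y = some b → x ≤ y → a ≤ b

def IsOrderReversing (α : ℕ → Option ℕ) : Prop :=
  ∀ x y a b, α x = some a → α y = some b → x ≤ y → b ≤ a

/-- `CP n`: the partial contractions of `[n]`. -/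
def CP (n : ℕ) (α : ℕ → Option ℕ) : Prop := IsPT n α ∧ IsContraction α

/-- `OCP n`: the order preserving partial contractions of `[n]`. -/
def OCP (n : ℕ) (α : ℕ → Option ℕ) : Prop := CP n α ∧ IsOrderPreserving α

/-- `ORCP n`: the order preserving or order reversing partial contractions of `[n]`. -/
def ORCP (n : ℕ) (α : ℕ → Option ℕ) : Prop :=
  CP n α ∧ (IsOrderPreserving α ∨ IsOrderReversing α)

/-- The image of a partial transformation. -/
def img (α : ℕ → Option ℕ) : Set ℕ := {y | ∃ x, α x = some y}

/-- The kernel of a partial transformation: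
`{(x,y) ∈ dom α × dom α : xα = yα}`. -/
def pker (α : ℕ → Option ℕ) : Set (ℕ × ℕ) :=
  {p | α p.1 ≠ none ∧ α p.1 = α p.2}

/-- The starred Green's relation `L*` relative to the class `S`:
`α L* β` iff for all `γ, δ ∈ S`, `αγ = αδ ⟺ βγ = βδ`. -/
def LStar (S : (ℕ → Option ℕ) → Prop) (α β : ℕ → Option ℕ) : Prop :=
  ∀ γ δ, S γ → S δ → (pcomp α γ = pcomp α δ ↔ pcomp β γ = pcomp β δ)

/-- The starred Green's relation `R*` relative to the class `S`:
`α R* β` iff for all `γ, δ ∈ S`, `γα = δα ⟺ γβ = δβ`. -/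
def RStar (S : (ℕ → Option ℕ) → Prop) (α β : ℕ → Option ℕ) : Prop :=
  ∀ γ δ, S γ → S δ → (pcomp γ α = pcomp δ α ↔ pcomp γ β = pcomp δ β)

/-- `α` is a regular element of the class `S`: there is `β ∈ S` with `αβα = α`. -/
def RegularIn (S : (ℕ → Option ℕ) → Prop) (α : ℕ → Option ℕ) : Prop :=
  ∃ β, S β ∧ pcomp (pcomp α β) α = α

def A : ℕ → Option ℕ := fun x => if x = 1 then some 1 else if x = 3 then some 3 else none
def B : ℕ → Option ℕ := fun x => if x = 1 then some 1 else if x = 2 then some 2 else if x = 3 then some 2 else none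

lemma A_cases {x a : ℕ} (h : A x = some a) : (x = 1 ∧ a = 1) ∨ (x = 3 ∧ a = 3) := by
  unfold A at h; split_ifs at h <;> simp_all
lemma B_cases {x a : ℕ} (h : B x = some a) : (x = 1 ∧ a = 1) ∨ (x = 2 ∧ a = 2) ∨ (x = 3 ∧ a = 2) := by
  unfold B at h; split_ifs at h <;> simp_all

lemma orcpA : ORCP 3 A := by
  refine ⟨⟨?_, ?_⟩, Or.inl ?_⟩
  · intro x y h; rcases A_cases h with ⟨hx, hy⟩ | ⟨hx, hy⟩ <;> subst hx <;> subst hy <;>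
      simp [Set.mem_Icc]
  · intro x y a b hx hy
    rcases A_cases hx with ⟨h1, h2⟩ | ⟨h1, h2⟩ <;> rcases A_cases hy with ⟨h3, h4⟩ | ⟨h3, h4⟩ <;>
      subst_vars <;> simp [Nat.dist]
  · intro x y a b hx hy hxy
    rcases A_cases hx with ⟨h1, h2⟩ | ⟨h1, h2⟩ <;> rcases A_cases hy with ⟨h3, h4⟩ | ⟨h3, h4⟩ <;>
      omega

lemma orcpB : ORCP 3 B := by
  refine ⟨⟨?_, ?_⟩, Or.inl ?_⟩
  · intro x y h; rcases B_cases h with ⟨hx, hy⟩ | ⟨hx, hy⟩ | ⟨hx, hy⟩ <;> subst_vars <;>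
      simp [Set.mem_Icc]
  · intro x y a b hx hy
    rcases B_cases hx with ⟨h1, h2⟩ | ⟨h1, h2⟩ | ⟨h1, h2⟩ <;>
      rcases B_cases hy with ⟨h3, h4⟩ | ⟨h3, h4⟩ | ⟨h3, h4⟩ <;> subst_vars <;> simp [Nat.dist]
  · intro x y a b hx hy hxy
    rcases B_cases hx with ⟨h1, h2⟩ | ⟨h1, h2⟩ | ⟨h1, h2⟩ <;>
      rcases B_cases hy with ⟨h3, h4⟩ | ⟨h3, h4⟩ | ⟨h3, h4⟩ <;> omega

lemma AB_cases {x a : ℕ} (h : pcomp A B x = some a) : (x = 1 ∧ a = 1) ∨ (x = 3 ∧ a = 2) := by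
  rw [pcomp, Option.bind_eq_some_iff] at h
  obtain ⟨t, h1, h2⟩ := h
  rcases A_cases h1 with ⟨hx, ht⟩ | ⟨hx, ht⟩ <;> subst_vars <;>
    rcases B_cases h2 with ⟨h3, h4⟩ | ⟨h3, h4⟩ | ⟨h3, h4⟩ <;> omega

/-- The product of regular elements of `ORCP 3` need not be regular. -/
theorem exists_regular_product_not_regular :
    ∃ α β : ℕ → Option ℕ, ORCP 3 α ∧ ORCP 3 β ∧
      RegularIn (ORCP 3) α ∧ RegularIn (ORCP 3) β ∧
      ¬ RegularIn (ORCP 3) (pcomp α β) := by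
  refine ⟨A, B, orcpA, orcpB, ⟨A, orcpA, ?_⟩, ⟨B, orcpB, ?_⟩, ?_⟩
  · funext x; simp only [pcomp, A]; split_ifs <;> simp_all [A]
  · funext x; simp only [pcomp, B]; split_ifs <;> simp_all [B]
  · rintro ⟨γ, hγ, hEq⟩
    have h1 : ((pcomp A B 1).bind γ).bind (pcomp A B) = pcomp A B 1 := congrFun hEq 1
    have h3 : ((pcomp A B 3).bind γ).bind (pcomp A B) = pcomp A B 3 := congrFun hEq 3
    have e1 : pcomp A B 1 = some 1 := rfl
    have e3 : pcomp A B 3 = some 2 := rfl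
    rw [e1, Option.bind_some] at h1
    rw [e3, Option.bind_some] at h3
    rw [Option.bind_eq_some_iff] at h1 h3
    obtain ⟨t, ht, ht'⟩ := h1
    obtain ⟨s, hs, hs'⟩ := h3
    rcases AB_cases ht' with ⟨h, h'⟩ | ⟨h, h'⟩ <;> rcases AB_cases hs' with ⟨g, g'⟩ | ⟨g, g'⟩ <;>
      try omega
    subst_vars
    have := hγ.1.2 1 2 1 3 ht hs
    simp [Nat.dist] at this
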